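/- arXiv:2604.03566 — 2 statements merged into one kernel-verified Lean document; each statement's English description precedes it below -/
import Mathlib

section
/- Let Σ₁, …, Σ_n be symmetric positive definite d×d real matrices and λ₁, …, λ_n real weights with Σ_{k=1}^n λ_k = 1. Then F attains its infimum over the closed cone of symmetric positive semidefinite d×d matrices: there exists a symmetric positive semidefinite matrix Ŝ with F(Ŝ) ≤ F(S) for every symmetric positive semidefinite S. -/
open Matrix BigOperators Finset
open scoped Classical

/-- Unique positive semidefinite square root of a positive semidefinite matrix
(and junk value `0` on other matrices). -/
noncomputable def msqrt {d : ℕ} (M : Matrix (Fin d) (Fin d) ℝ) :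
    Matrix (Fin d) (Fin d) ℝ :=
  if h : M.PosSemidef then
    (h.1.eigenvectorUnitary : Matrix (Fin d) (Fin d) ℝ) *
      diagonal ((↑) ∘ Real.sqrt ∘ h.1.eigenvalues) *
      (star h.1.eigenvectorUnitary : Matrix (Fin d) (Fin d) ℝ)
  else 0

/-- Smallest eigenvalue of a symmetric matrix (junk value `0` otherwise). -/
noncomputable def lmin {d : ℕ} (M : Matrix (Fin d) (Fin d) ℝ) : ℝ :=
  if h : M.IsHermitian then ⨅ i, h.eigenvalues i else 0

/-- Largest eigenvalue of a symmetric matrix (junk value `0` otherwise). -/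
noncomputable def lmax {d : ℕ} (M : Matrix (Fin d) (Fin d) ℝ) : ℝ :=
  if h : M.IsHermitian then ⨆ i, h.eigenvalues i else 0

/-- Squared Bures–Wasserstein distance. -/
noncomputable def W2sq {d : ℕ} (A B : Matrix (Fin d) (Fin d) ℝ) : ℝ :=
  A.trace + B.trace - 2 * (msqrt (msqrt A * B * msqrt A)).trace

/-- The conditional barycenter objective `F`. -/
noncomputable def Fobj {d n : ℕ} (Sig : Fin n → Matrix (Fin d) (Fin d) ℝ)
    (lam : Fin n → ℝ) (S : Matrix (Fin d) (Fin d) ℝ) : ℝ :=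
  ∑ k, lam k * W2sq S (Sig k)

/-- Geometric mean `GM(S⁻¹, Σ) = S^{-1/2} (S^{1/2} Σ S^{1/2})^{1/2} S^{-1/2}`. -/
noncomputable def GMinv {d : ℕ} (S Sigma : Matrix (Fin d) (Fin d) ℝ) :
    Matrix (Fin d) (Fin d) ℝ :=
  (msqrt S)⁻¹ * msqrt (msqrt S * Sigma * msqrt S) * (msqrt S)⁻¹

/-- The Spectral Dominance of Positive Weights condition. -/
def SDPW {d n : ℕ} (Sig : Fin n → Matrix (Fin d) (Fin d) ℝ) (lam : Fin n → ℝ) : Prop :=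
  ∑ j ∈ Finset.univ.filter (fun k => lam k < 0), (-lam j) * Real.sqrt (lmax (Sig j))
    < ∑ i ∈ Finset.univ.filter (fun k => 0 < lam k), lam i * Real.sqrt (lmin (Sig i))

namespace BW
variable {d : ℕ}

lemma msqrt_eq {M : Matrix (Fin d) (Fin d) ℝ} (h : M.PosSemidef) : msqrt M = cfc Real.sqrt M := by
  rw [msqrt, dif_pos h, h.1.cfc_eq, IsHermitian.cfc, Unitary.conjStarAlgAut_apply]; rfl

lemma msqrt_posSemidef {M : Matrix (Fin d) (Fin d) ℝ} (h : M.PosSemidef) :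
    (msqrt M).PosSemidef := by
  rw [msqrt, dif_pos h]
  have hD : (diagonal ((↑) ∘ Real.sqrt ∘ h.1.eigenvalues) : Matrix (Fin d) (Fin d) ℝ).PosSemidef :=
    PosSemidef.diagonal (fun i => Real.sqrt_nonneg _)
  have := hD.mul_mul_conjTranspose_same (h.1.eigenvectorUnitary : Matrix (Fin d) (Fin d) ℝ)
  rwa [← Matrix.star_eq_conjTranspose] at this

lemma msqrt_mul_self {M : Matrix (Fin d) (Fin d) ℝ} (h : M.PosSemidef) :
    msqrt M * msqrt M = M := by
  rw [msqrt_eq h, ← cfc_mul Real.sqrt Real.sqrt M]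
  conv_rhs => rw [← cfc_id' ℝ M h.1.isSelfAdjoint]
  refine cfc_congr fun x hx => ?_
  rw [h.1.spectrum_real_eq_range_eigenvalues] at hx
  obtain ⟨i, rfl⟩ := hx
  exact Real.mul_self_sqrt (h.eigenvalues_nonneg i)

lemma msqrt_herm {M : Matrix (Fin d) (Fin d) ℝ} (h : M.PosSemidef) :
    (msqrt M)ᴴ = msqrt M := (msqrt_posSemidef h).1

lemma eq_msqrt {M R : Matrix (Fin d) (Fin d) ℝ} (hM : M.PosSemidef) (hR : R.PosSemidef)
    (h : R * R = M) : msqrt M = R := by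
  rw [msqrt_eq hM, ← h, ← pow_two, ← cfc_comp_pow Real.sqrt 2 R (ha := hR.1.isSelfAdjoint)]
  conv_rhs => rw [← cfc_id' ℝ R hR.1.isSelfAdjoint]
  refine cfc_congr fun x hx => ?_
  rw [hR.1.spectrum_real_eq_range_eigenvalues] at hx
  obtain ⟨i, rfl⟩ := hx
  exact Real.sqrt_sq (hR.eigenvalues_nonneg i)

lemma msqrt_zero : msqrt (0 : Matrix (Fin d) (Fin d) ℝ) = 0 :=
  eq_msqrt .zero .zero (by simp)

lemma diag_nonneg {M : Matrix (Fin d) (Fin d) ℝ} (h : M.PosSemidef) (i : Fin d) :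
    0 ≤ M i i := by
  have := h.dotProduct_mulVec_nonneg (Pi.single i 1)
  simpa using this

lemma trace_nonneg {M : Matrix (Fin d) (Fin d) ℝ} (h : M.PosSemidef) : 0 ≤ M.trace := by
  rw [Matrix.trace]
  exact Finset.sum_nonneg fun i _ => diag_nonneg h i

lemma trace_mul_nonneg {P Q : Matrix (Fin d) (Fin d) ℝ} (hP : P.PosSemidef)
    (hQ : Q.PosSemidef) : 0 ≤ (P * Q).trace := by
  have h1 : P * Q = msqrt P * msqrt P * Q := by rw [msqrt_mul_self hP]
  have h2 : (msqrt P * Q * msqrt P).trace = (P*Q).trace := by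
    rw [h1, Matrix.trace_mul_cycle (msqrt P) Q (msqrt P)]
  rw [← h2]
  refine trace_nonneg ?_
  have := hQ.conjTranspose_mul_mul_same (msqrt P)
  rwa [msqrt_herm hP] at this

/-- trace monotone -/
lemma trace_le_trace {A B : Matrix (Fin d) (Fin d) ℝ} (h : (B - A).PosSemidef) :
    A.trace ≤ B.trace := by
  have := trace_nonneg h
  rw [Matrix.trace_sub] at this
  linarith

/-- sum of absolute values of entries -/
noncomputable def csum {d : ℕ} (M : Matrix (Fin d) (Fin d) ℝ) : ℝ := ∑ i, ∑ j, |M i j|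

lemma csum_nonneg (M : Matrix (Fin d) (Fin d) ℝ) : 0 ≤ csum M :=
  Finset.sum_nonneg fun _ _ => Finset.sum_nonneg fun _ _ => abs_nonneg _

lemma eq_of_csum_eq_zero {M : Matrix (Fin d) (Fin d) ℝ} (h : csum M = 0) : M = 0 := by
  ext i j
  have h1 : ∀ i ∈ (univ : Finset (Fin d)), ∑ j, |M i j| = 0 := by
    intro i _
    have := (Finset.sum_eq_zero_iff_of_nonneg (fun i _ => Finset.sum_nonneg fun j _ => abs_nonneg (M i j))).mp h
    exact this i (mem_univ i)
  have h2 := (Finset.sum_eq_zero_iff_of_nonneg (fun j _ => abs_nonneg (M i j))).mp (h1 i (mem_univ i)) j (mem_univ j)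
  simpa using abs_eq_zero.mp h2

lemma abs_quad_le (M : Matrix (Fin d) (Fin d) ℝ) (x : Fin d → ℝ) :
    |x ⬝ᵥ (M *ᵥ x)| ≤ csum M * (x ⬝ᵥ x) := by
  have hxx : ∀ k : Fin d, x k ^ 2 ≤ x ⬝ᵥ x := by
    intro k
    rw [dotProduct]
    calc x k ^ 2 = x k * x k := sq (x k) ▸ (by ring)
    _ ≤ ∑ i, x i * x i := Finset.single_le_sum (f := fun i => x i * x i)
        (fun i _ => mul_self_nonneg _) (mem_univ k)
  have h1 : x ⬝ᵥ (M *ᵥ x) = ∑ i, ∑ j, x i * (M i j * x j) := by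
    simp [dotProduct, Matrix.mulVec, Finset.mul_sum]
  rw [h1]
  calc |∑ i, ∑ j, x i * (M i j * x j)| ≤ ∑ i, |∑ j, x i * (M i j * x j)| :=
        Finset.abs_sum_le_sum_abs _ _
    _ ≤ ∑ i, ∑ j, |x i * (M i j * x j)| :=
        Finset.sum_le_sum fun i _ => Finset.abs_sum_le_sum_abs _ _
    _ ≤ ∑ i, ∑ j, |M i j| * (x ⬝ᵥ x) := by
        refine Finset.sum_le_sum fun i _ => Finset.sum_le_sum fun j _ => ?_
        rw [abs_mul, abs_mul]
        have : |x i| * |x j| ≤ x ⬝ᵥ x := by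
          have h2 : |x i| * |x j| ≤ (|x i| ^ 2 + |x j| ^ 2) / 2 := by nlinarith [sq_nonneg (|x i| - |x j|)]
          have h3 : |x i| ^ 2 = x i ^ 2 := sq_abs _
          have h4 : |x j| ^ 2 = x j ^ 2 := sq_abs _
          have := hxx i; have := hxx j
          linarith
        calc |x i| * (|M i j| * |x j|) = |M i j| * (|x i| * |x j|) := by ring
          _ ≤ |M i j| * (x ⬝ᵥ x) := by
              exact mul_le_mul_of_nonneg_left this (abs_nonneg _)
    _ = csum M * (x ⬝ᵥ x) := by rw [csum, Finset.sum_mul]; congr 1; ext i; rw [Finset.sum_mul]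

lemma isHermitian_smul_one (c : ℝ) : ((c • (1 : Matrix (Fin d) (Fin d) ℝ))).IsHermitian := by
  simp [Matrix.IsHermitian]

lemma smul_one_sub_posSemidef {M : Matrix (Fin d) (Fin d) ℝ} (hM : M.IsHermitian)
    {c : ℝ} (hc : csum M ≤ c) : (c • (1 : Matrix (Fin d) (Fin d) ℝ) - M).PosSemidef := by
  refine Matrix.PosSemidef.of_dotProduct_mulVec_nonneg ?_ ?_
  · exact (isHermitian_smul_one c).sub hM
  · intro x
    have h1 := (abs_le.mp (abs_quad_le M x)).2
    have h2 : (0:ℝ) ≤ x ⬝ᵥ x := Finset.sum_nonneg fun i _ => mul_self_nonneg _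
    have h3 : csum M * (x ⬝ᵥ x) ≤ c * (x ⬝ᵥ x) := mul_le_mul_of_nonneg_right hc h2
    simp only [star_trivial, Matrix.sub_mulVec, Matrix.smul_mulVec, Matrix.one_mulVec,
      dotProduct_sub, dotProduct_smul]
    have : x ⬝ᵥ (M *ᵥ x) ≤ c * (x ⬝ᵥ x) := le_trans h1 h3
    simp only [smul_eq_mul]
    linarith

lemma smul_one_add_posSemidef {M : Matrix (Fin d) (Fin d) ℝ} (hM : M.IsHermitian)
    {c : ℝ} (hc : csum M ≤ c) : (c • (1 : Matrix (Fin d) (Fin d) ℝ) + M).PosSemidef := by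
  have hneg : csum (-M) ≤ c := by
    rw [csum]
    simpa [csum] using hc
  have := smul_one_sub_posSemidef hM.neg hneg
  simpa using this

lemma posDef_smul_one {s : ℝ} (hs : 0 < s) : (s • (1 : Matrix (Fin d) (Fin d) ℝ)).PosDef := by
  refine Matrix.PosDef.of_dotProduct_mulVec_pos ?_ ?_
  · exact isHermitian_smul_one s
  · intro x hx
    simp only [star_trivial, Matrix.smul_mulVec, Matrix.one_mulVec, dotProduct_smul,
      smul_eq_mul]
    have : 0 < x ⬝ᵥ x := by
      have := Matrix.dotProduct_star_self_pos_iff (v := x) |>.mpr hx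
      simpa using this
    positivity

lemma csum_mul_le (X Y : Matrix (Fin d) (Fin d) ℝ) : csum (X * Y) ≤ csum X * csum Y := by
  have h1 : ∀ i j, |(X * Y) i j| ≤ ∑ k, |X i k| * |Y k j| := by
    intro i j
    rw [Matrix.mul_apply]
    refine le_trans (Finset.abs_sum_le_sum_abs _ _) ?_
    exact Finset.sum_le_sum fun k _ => le_of_eq (abs_mul _ _)
  calc csum (X * Y) ≤ ∑ i, ∑ j, ∑ k, |X i k| * |Y k j| :=
        Finset.sum_le_sum fun i _ => Finset.sum_le_sum fun j _ => h1 i j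
    _ ≤ ∑ i, ∑ k, ∑ j, |X i k| * |Y k j| := by
        refine Finset.sum_le_sum fun i _ => le_of_eq (Finset.sum_comm)
    _ = ∑ i, ∑ k, |X i k| * ∑ j, |Y k j| := by
        refine Finset.sum_congr rfl fun i _ => Finset.sum_congr rfl fun k _ => ?_
        rw [Finset.mul_sum]
    _ ≤ ∑ i, ∑ k, |X i k| * csum Y := by
        refine Finset.sum_le_sum fun i _ => Finset.sum_le_sum fun k _ => ?_
        refine mul_le_mul_of_nonneg_left ?_ (abs_nonneg _)
        rw [csum]
        refine Finset.single_le_sum (f := fun k => ∑ j, |Y k j|)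
          (fun k _ => Finset.sum_nonneg fun j _ => abs_nonneg _) (mem_univ k)
    _ = csum X * csum Y := by
        simp only [csum, Finset.sum_mul]

lemma csum_add_le (X Y : Matrix (Fin d) (Fin d) ℝ) : csum (X + Y) ≤ csum X + csum Y := by
  rw [csum, csum, csum, ← Finset.sum_add_distrib]
  refine Finset.sum_le_sum fun i _ => ?_
  rw [← Finset.sum_add_distrib]
  exact Finset.sum_le_sum fun j _ => abs_add_le _ _

lemma csum_smul (t : ℝ) (M : Matrix (Fin d) (Fin d) ℝ) : csum (t • M) = |t| * csum M := by
  rw [csum, csum, Finset.mul_sum]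
  refine Finset.sum_congr rfl fun i _ => ?_
  rw [Finset.mul_sum]
  refine Finset.sum_congr rfl fun j _ => ?_
  simp [abs_mul]

lemma csum_one : csum (1 : Matrix (Fin d) (Fin d) ℝ) = d := by
  rw [csum]
  have : ∀ i : Fin d, ∑ j, |(1 : Matrix (Fin d) (Fin d) ℝ) i j| = 1 := by
    intro i
    rw [Finset.sum_eq_single i]
    · simp
    · intro j _ hj
      simp [Matrix.one_apply_ne' hj]
    · simp
  simp [this]

lemma abs_trace_le_csum (M : Matrix (Fin d) (Fin d) ℝ) : |M.trace| ≤ csum M := by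
  rw [Matrix.trace, csum]
  refine le_trans (Finset.abs_sum_le_sum_abs _ _) ?_
  refine Finset.sum_le_sum fun i _ => ?_
  exact Finset.single_le_sum (f := fun j => |M i j|) (fun j _ => abs_nonneg _) (mem_univ i)


lemma smul_posSemidef {M : Matrix (Fin d) (Fin d) ℝ} (hM : M.PosSemidef) {c : ℝ} (hc : 0 ≤ c) :
    (c • M).PosSemidef := by
  refine Matrix.PosSemidef.of_dotProduct_mulVec_nonneg ?_ ?_
  · show (c • M)ᴴ = c • M
    rw [Matrix.conjTranspose_smul, hM.1.eq, star_trivial]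
  · intro x
    have := hM.dotProduct_mulVec_nonneg x
    simp only [Matrix.smul_mulVec, dotProduct_smul, smul_eq_mul, star_trivial] at this ⊢
    positivity

/-- AM-GM : Tr √M ≤ (Tr(T⁻¹ M) + Tr T)/2 for T posdef. -/
lemma amgm {M T : Matrix (Fin d) (Fin d) ℝ} (hM : M.PosSemidef) (hT : T.PosDef) :
    (msqrt M).trace ≤ ((T⁻¹ * M).trace + T.trace) / 2 := by
  set X := msqrt M with hX
  have hXX : X * X = M := msqrt_mul_self hM
  have hdet : IsUnit T.det := (Matrix.isUnit_iff_isUnit_det T).mp hT.isUnit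
  have hTiT : T⁻¹ * T = 1 := Matrix.nonsing_inv_mul _ hdet
  have hTTi : T * T⁻¹ = 1 := Matrix.mul_nonsing_inv _ hdet
  have hW : (X - T)ᴴ = X - T := by
    rw [Matrix.conjTranspose_sub, msqrt_herm hM, hT.isHermitian.eq]
  have hpsd : ((X - T)ᴴ * T⁻¹ * (X - T)).PosSemidef :=
    hT.inv.posSemidef.conjTranspose_mul_mul_same (X - T)
  have key : 0 ≤ ((X - T) * T⁻¹ * (X - T)).trace := by
    have := trace_nonneg hpsd
    rwa [hW] at this
  have expand : (X - T) * T⁻¹ * (X - T)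
      = X * T⁻¹ * X - X * (T⁻¹ * T) - (T * T⁻¹) * X + T * (T⁻¹ * T) := by
    noncomm_ring
  rw [expand, hTiT, hTTi] at key
  simp only [Matrix.mul_one, Matrix.one_mul] at key
  have htr : (X * T⁻¹ * X).trace = (T⁻¹ * M).trace := by
    rw [Matrix.trace_mul_cycle X T⁻¹ X, Matrix.trace_mul_comm, hXX]
  rw [Matrix.trace_add, Matrix.trace_sub, Matrix.trace_sub, htr] at key
  linarith

/-- coercivity bound : Tr √M ≤ (Tr M / s + s * d)/2. -/
lemma trsq_le_coercive {M : Matrix (Fin d) (Fin d) ℝ} (hM : M.PosSemidef) {s : ℝ} (hs : 0 < s) :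
    (msqrt M).trace ≤ (M.trace / s + s * d) / 2 := by
  have hT : (s • (1 : Matrix (Fin d) (Fin d) ℝ)).PosDef := posDef_smul_one hs
  have hinv : (s • (1 : Matrix (Fin d) (Fin d) ℝ))⁻¹ = s⁻¹ • (1 : Matrix (Fin d) (Fin d) ℝ) := by
    apply Matrix.inv_eq_right_inv
    rw [Matrix.smul_mul, Matrix.mul_smul, Matrix.one_mul, smul_smul, mul_inv_cancel₀ hs.ne']
    simp
  have := amgm hM hT
  rw [hinv, Matrix.smul_mul, Matrix.one_mul, Matrix.trace_smul, Matrix.trace_smul,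
    Matrix.trace_one] at this
  simpa [div_eq_inv_mul, smul_eq_mul] using this

/-- Shift lemma: if A ≤ B + δ1 then Tr √A ≤ Tr √B + d √δ. -/
lemma trsq_shift {A B : Matrix (Fin d) (Fin d) ℝ} (hA : A.PosSemidef) (hB : B.PosSemidef)
    {δ : ℝ} (hδ : 0 < δ) (hdom : (B + δ • (1 : Matrix (Fin d) (Fin d) ℝ) - A).PosSemidef) :
    (msqrt A).trace ≤ (msqrt B).trace + d * Real.sqrt δ := by
  have hrt : 0 < Real.sqrt δ := Real.sqrt_pos.mpr hδ
  set T : Matrix (Fin d) (Fin d) ℝ := msqrt B + Real.sqrt δ • 1 with hTdef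
  have hTpos : T.PosDef := Matrix.PosDef.posSemidef_add (msqrt_posSemidef hB) (posDef_smul_one hrt)
  have hsq : T * T = B + (2 * Real.sqrt δ) • msqrt B + δ • (1 : Matrix (Fin d) (Fin d) ℝ) := by
    have hss : Real.sqrt δ * Real.sqrt δ = δ := Real.mul_self_sqrt hδ.le
    have h11 : (Real.sqrt δ • (1 : Matrix (Fin d) (Fin d) ℝ)) * (Real.sqrt δ • 1)
        = δ • (1 : Matrix (Fin d) (Fin d) ℝ) := by
      rw [Matrix.smul_mul, Matrix.mul_smul, Matrix.one_mul, smul_smul, hss]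
    have h12 : msqrt B * (Real.sqrt δ • (1 : Matrix (Fin d) (Fin d) ℝ))
        = Real.sqrt δ • msqrt B := by rw [Matrix.mul_smul, Matrix.mul_one]
    have h13 : (Real.sqrt δ • (1 : Matrix (Fin d) (Fin d) ℝ)) * msqrt B
        = Real.sqrt δ • msqrt B := by rw [Matrix.smul_mul, Matrix.one_mul]
    rw [hTdef, Matrix.add_mul, Matrix.mul_add, Matrix.mul_add, msqrt_mul_self hB,
      h11, h12, h13]
    module
  have h1 := amgm hA hTpos
  have h2 : (T⁻¹ * A).trace ≤ T.trace := by
    have hd : (T * T - A).PosSemidef := by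
      have heq : T * T - A = (B + δ • (1 : Matrix (Fin d) (Fin d) ℝ) - A)
          + (2 * Real.sqrt δ) • msqrt B := by
        rw [hsq]; module
      rw [heq]
      exact hdom.add (smul_posSemidef (msqrt_posSemidef hB) (by positivity))
    have h5 : 0 ≤ (T⁻¹ * (T * T - A)).trace :=
      trace_mul_nonneg hTpos.inv.posSemidef hd
    have hdet : IsUnit T.det := (Matrix.isUnit_iff_isUnit_det T).mp hTpos.isUnit
    have h3 : T⁻¹ * (T * T) = T := by
      rw [← Matrix.mul_assoc, Matrix.nonsing_inv_mul _ hdet, Matrix.one_mul]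
    rw [Matrix.mul_sub, Matrix.trace_sub, h3] at h5
    linarith
  have h4 : T.trace = (msqrt B).trace + Real.sqrt δ * d := by
    rw [hTdef, Matrix.trace_add, Matrix.trace_smul, Matrix.trace_one]
    simp
  have h6 : Real.sqrt δ * d = d * Real.sqrt δ := mul_comm _ _
  linarith




/-- flip identity for invertible matrices -/
lemma flip_inv {A : Matrix (Fin d) (Fin d) ℝ} (hA : IsUnit A.det) :
    (msqrt (Aᴴ * A)).trace = (msqrt (A * Aᴴ)).trace := by
  have hN : (Aᴴ * A).PosSemidef := Matrix.posSemidef_conjTranspose_mul_self A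
  set R := msqrt (Aᴴ * A) with hR
  have hRpsd : R.PosSemidef := msqrt_posSemidef hN
  have hRR : R * R = Aᴴ * A := msqrt_mul_self hN
  have hdetR : IsUnit R.det := by
    have h1 : R.det * R.det = Aᴴ.det * A.det := by
      rw [← Matrix.det_mul, hRR, Matrix.det_mul]
    have h2 : IsUnit (R.det * R.det) := by
      rw [h1]
      exact (by rwa [Matrix.det_conjTranspose]; : IsUnit Aᴴ.det).mul hA
    exact isUnit_of_mul_isUnit_left h2
  have hRiR : R⁻¹ * R = 1 := Matrix.nonsing_inv_mul _ hdetR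
  have hRRi : R * R⁻¹ = 1 := Matrix.mul_nonsing_inv _ hdetR
  have hRinvH : (R⁻¹)ᴴ = R⁻¹ := by
    rw [Matrix.conjTranspose_nonsing_inv, hRpsd.1.eq]
  set W := A * R⁻¹ with hW
  have hWH : Wᴴ = R⁻¹ * Aᴴ := by rw [hW, Matrix.conjTranspose_mul, hRinvH]
  have hWW : Wᴴ * W = 1 := by
    rw [hWH, hW]
    calc R⁻¹ * Aᴴ * (A * R⁻¹) = R⁻¹ * (Aᴴ * A) * R⁻¹ := by noncomm_ring
      _ = R⁻¹ * (R * R) * R⁻¹ := by rw [hRR]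
      _ = (R⁻¹ * R) * (R * R⁻¹) := by noncomm_ring
      _ = 1 := by rw [hRiR, hRRi, Matrix.one_mul]
  have hK : (W * R * Wᴴ).PosSemidef := hRpsd.mul_mul_conjTranspose_same W
  have hWR : W * R = A := by rw [hW, Matrix.mul_assoc, hRiR, Matrix.mul_one]
  have hRW : R * Wᴴ = Aᴴ := by rw [hWH, ← Matrix.mul_assoc, hRRi, Matrix.one_mul]
  have hKK : (W * R * Wᴴ) * (W * R * Wᴴ) = A * Aᴴ := by
    calc (W * R * Wᴴ) * (W * R * Wᴴ) = (W * R) * (Wᴴ * W) * (R * Wᴴ) := by noncomm_ring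
      _ = (W * R) * (R * Wᴴ) := by rw [hWW, Matrix.mul_one]
      _ = A * Aᴴ := by rw [hWR, hRW]
  have hMsq : msqrt (A * Aᴴ) = W * R * Wᴴ :=
    eq_msqrt (Matrix.posSemidef_self_mul_conjTranspose A) hK hKK
  rw [hMsq]
  have h9 : (W * R * Wᴴ).trace = (Wᴴ * (W * R)).trace := Matrix.trace_mul_comm _ _
  rw [h9, ← Matrix.mul_assoc, hWW, Matrix.one_mul]


/-- L7 : Hölder-type estimate. -/
lemma trsq_dist {A B : Matrix (Fin d) (Fin d) ℝ} (hA : A.PosSemidef) (hB : B.PosSemidef) :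
    |(msqrt A).trace - (msqrt B).trace| ≤ d * Real.sqrt (csum (A - B)) := by
  rcases eq_or_lt_of_le (csum_nonneg (A - B)) with h0 | hpos
  · have h1 : A - B = 0 := eq_of_csum_eq_zero h0.symm
    have h2 : A = B := by rwa [sub_eq_zero] at h1
    subst h2
    simp only [sub_self, abs_zero]
    positivity
  · have hcs : csum (B - A) = csum (A - B) := by
      simp [csum, abs_sub_comm]
    have hdom1 : (B + csum (A - B) • (1 : Matrix (Fin d) (Fin d) ℝ) - A).PosSemidef := by
      have := smul_one_sub_posSemidef (hA.1.sub hB.1) (le_refl (csum (A - B)))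
      have heq : csum (A - B) • (1 : Matrix (Fin d) (Fin d) ℝ) - (A - B)
          = B + csum (A - B) • (1 : Matrix (Fin d) (Fin d) ℝ) - A := by abel
      rwa [heq] at this
    have hdom2 : (A + csum (A - B) • (1 : Matrix (Fin d) (Fin d) ℝ) - B).PosSemidef := by
      have := smul_one_sub_posSemidef (hB.1.sub hA.1) (le_of_eq hcs)
      have heq : csum (A - B) • (1 : Matrix (Fin d) (Fin d) ℝ) - (B - A)
          = A + csum (A - B) • (1 : Matrix (Fin d) (Fin d) ℝ) - B := by abel
      rwa [heq] at this
    refine abs_le.mpr ⟨?_, ?_⟩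
    · have := trsq_shift hB hA hpos hdom2
      linarith
    · have := trsq_shift hA hB hpos hdom1
      linarith

lemma det_add_smul_one (A : Matrix (Fin d) (Fin d) ℝ) (t : ℝ) :
    (A + t • (1 : Matrix (Fin d) (Fin d) ℝ)).det = ((-A).charpoly).eval t := by
  rw [Matrix.charpoly, ← Polynomial.coe_evalRingHom, RingHom.map_det]
  congr 1
  ext i j
  by_cases h : i = j
  · subst h
    simp [Matrix.charmatrix_apply_eq, Matrix.one_apply_eq, add_comm]
  · simp [Matrix.charmatrix_apply_ne _ _ _ h, Matrix.one_apply_ne h]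

/-- general flip identity -/
lemma trsq_flip (A : Matrix (Fin d) (Fin d) ℝ) :
    (msqrt (Aᴴ * A)).trace = (msqrt (A * Aᴴ)).trace := by
  by_contra hne
  set L := (msqrt (Aᴴ * A)).trace with hL
  set R := (msqrt (A * Aᴴ)).trace with hRR
  have hε : 0 < |L - R| := abs_pos.mpr (sub_ne_zero.mpr hne)
  set ε := |L - R| with hεdef
  set c1 : ℝ := csum (Aᴴ + A) + d + 1 with hc1
  have hc1pos : 0 < c1 := by
    have := csum_nonneg (Aᴴ + A)
    have : (0:ℝ) ≤ d := Nat.cast_nonneg d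
    positivity
  set η : ℝ := min 1 ((ε / (2 * d + 1)) ^ 2 / c1) with hη
  have hηpos : 0 < η := by
    have h2d : (0:ℝ) < 2 * d + 1 := by positivity
    refine lt_min one_pos ?_
    positivity
  -- find admissible t
  obtain ⟨t, ht⟩ : ∃ t : ℝ, t ∈ Set.Ioo (0:ℝ) η ∧ IsUnit (A + t • (1 : Matrix (Fin d) (Fin d) ℝ)).det := by
    have hP : ((-A).charpoly) ≠ 0 := ((-A).charpoly_monic).ne_zero
    have hfin := Polynomial.finite_setOf_isRoot hP
    have hinf : (Set.Ioo (0:ℝ) η).Infinite := Set.infinite_coe_iff.mp (Set.Ioo.infinite hηpos)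
    obtain ⟨t, ht⟩ := (hinf.diff hfin).nonempty
    refine ⟨t, ht.1, ?_⟩
    rw [det_add_smul_one, isUnit_iff_ne_zero]
    exact fun h => ht.2 h
  obtain ⟨⟨ht0, htη⟩, htunit⟩ := ht
  set At := A + t • (1 : Matrix (Fin d) (Fin d) ℝ) with hAt
  set E := t • (Aᴴ + A) + (t ^ 2) • (1 : Matrix (Fin d) (Fin d) ℝ) with hE
  have hAtH : Atᴴ = Aᴴ + t • (1 : Matrix (Fin d) (Fin d) ℝ) := by
    rw [hAt, Matrix.conjTranspose_add, Matrix.conjTranspose_smul, Matrix.conjTranspose_one,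
      star_trivial]
  have key1 : Atᴴ * At = Aᴴ * A + E := by
    rw [hAtH, hAt, Matrix.add_mul, Matrix.mul_add, Matrix.mul_add, hE]
    rw [Matrix.mul_smul, Matrix.smul_mul, Matrix.smul_mul, Matrix.mul_smul,
      Matrix.mul_one, Matrix.one_mul, Matrix.one_mul, smul_smul, ← pow_two]
    rw [smul_add]
    abel
  have key2 : At * Atᴴ = A * Aᴴ + E := by
    rw [hAtH, hAt, Matrix.add_mul, Matrix.mul_add, Matrix.mul_add, hE]
    rw [Matrix.mul_smul, Matrix.smul_mul, Matrix.smul_mul, Matrix.mul_smul,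
      Matrix.mul_one, Matrix.one_mul, Matrix.one_mul, smul_smul, ← pow_two]
    rw [smul_add]
    abel
  have hcsE : csum E < (ε / (2 * d + 1)) ^ 2 := by
    have h1 : csum E ≤ |t| * csum (Aᴴ + A) + |t ^ 2| * csum (1 : Matrix (Fin d) (Fin d) ℝ) := by
      refine le_trans (csum_add_le _ _) ?_
      rw [csum_smul, csum_smul]
    have habs : |t| = t := abs_of_pos ht0
    have habs2 : |t ^ 2| = t ^ 2 := abs_of_pos (by positivity)
    rw [habs, habs2, csum_one] at h1
    have ht1 : t ≤ 1 := le_of_lt (lt_of_lt_of_le htη (min_le_left _ _))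
    have ht2 : t ^ 2 ≤ t := by nlinarith
    have h2 : csum E ≤ t * (csum (Aᴴ + A) + d) := by nlinarith [csum_nonneg (Aᴴ + A)]
    have h3 : t * (csum (Aᴴ + A) + d) < c1 * ((ε / (2 * d + 1)) ^ 2 / c1) := by
      have hlt : t < (ε / (2 * d + 1)) ^ 2 / c1 := lt_of_lt_of_le htη (min_le_right _ _)
      have hle : csum (Aᴴ + A) + d < c1 := by rw [hc1]; linarith
      have h4 : (0:ℝ) ≤ csum (Aᴴ + A) + d := by
        have := csum_nonneg (Aᴴ + A)
        have : (0:ℝ) ≤ d := Nat.cast_nonneg d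
        linarith
      calc t * (csum (Aᴴ + A) + d) ≤ t * c1 := by nlinarith
        _ < ((ε / (2 * d + 1)) ^ 2 / c1) * c1 := by
            exact mul_lt_mul_of_pos_right hlt hc1pos
        _ = c1 * ((ε / (2 * d + 1)) ^ 2 / c1) := by ring
    have h5 : c1 * ((ε / (2 * d + 1)) ^ 2 / c1) = (ε / (2 * d + 1)) ^ 2 := by
      rw [mul_comm, div_mul_cancel₀ _ hc1pos.ne']
    linarith
  have hsqrtE : Real.sqrt (csum E) < ε / (2 * d + 1) := by
    have h2d : (0:ℝ) < ε / (2 * d + 1) := by positivity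
    have := Real.sqrt_lt_sqrt (csum_nonneg E) hcsE
    rwa [Real.sqrt_sq h2d.le] at this
  have hLt : |(msqrt (Atᴴ * At)).trace - L| ≤ d * Real.sqrt (csum E) := by
    have hd := trsq_dist (Matrix.posSemidef_conjTranspose_mul_self At)
      (Matrix.posSemidef_conjTranspose_mul_self A)
    have : Atᴴ * At - Aᴴ * A = E := by rw [key1]; abel
    rwa [this] at hd
  have hRt : |(msqrt (At * Atᴴ)).trace - R| ≤ d * Real.sqrt (csum E) := by
    have hd := trsq_dist (Matrix.posSemidef_self_mul_conjTranspose At)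
      (Matrix.posSemidef_self_mul_conjTranspose A)
    have : At * Atᴴ - A * Aᴴ = E := by rw [key2]; abel
    rwa [this] at hd
  have hflip : (msqrt (Atᴴ * At)).trace = (msqrt (At * Atᴴ)).trace := flip_inv htunit
  have hfinal : ε ≤ 2 * d * Real.sqrt (csum E) := by
    have := abs_sub_abs_le_abs_sub (L - (msqrt (Atᴴ * At)).trace) (R - (msqrt (At * Atᴴ)).trace)
    -- ε = |L - R| ≤ |L - Lt| + |Rt - R|
    have h6 : |L - R| ≤ |L - (msqrt (Atᴴ * At)).trace| + |(msqrt (At * Atᴴ)).trace - R| := by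
      have heq : L - R = (L - (msqrt (Atᴴ * At)).trace) + ((msqrt (At * Atᴴ)).trace - R) := by
        rw [hflip]; ring
      rw [heq]
      exact abs_add_le _ _
    calc ε = |L - R| := rfl
      _ ≤ |L - (msqrt (Atᴴ * At)).trace| + |(msqrt (At * Atᴴ)).trace - R| := h6
      _ = |(msqrt (Atᴴ * At)).trace - L| + |(msqrt (At * Atᴴ)).trace - R| := by
          rw [abs_sub_comm L]
      _ ≤ d * Real.sqrt (csum E) + d * Real.sqrt (csum E) := add_le_add hLt hRt
      _ = 2 * d * Real.sqrt (csum E) := by ring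
  have hcontra : 2 * (d:ℝ) * Real.sqrt (csum E) < ε := by
    have hd0 : (0:ℝ) ≤ 2 * d := by positivity
    calc 2 * (d:ℝ) * Real.sqrt (csum E) ≤ 2 * d * (ε / (2 * d + 1)) := by
          exact mul_le_mul_of_nonneg_left hsqrtE.le hd0
      _ < ε := by
          have h2d1 : (0:ℝ) < 2 * d + 1 := by positivity
          have hu : ε / (2 * (d:ℝ) + 1) * (2 * (d:ℝ) + 1) = ε := div_mul_cancel₀ _ h2d1.ne'
          have h2d0 : 0 < ε / (2 * (d:ℝ) + 1) := by positivity
          nlinarith [hu, h2d0]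
  linarith


lemma entry_abs_le_trace {S : Matrix (Fin d) (Fin d) ℝ} (hS : S.PosSemidef) (i j : Fin d) :
    |S i j| ≤ S.trace := by
  have htr : ∀ k : Fin d, S k k ≤ S.trace := by
    intro k
    exact Finset.single_le_sum (f := fun k => S k k) (fun l _ => diag_nonneg hS l) (mem_univ k)
  by_cases hij : i = j
  · subst hij
    rw [abs_of_nonneg (diag_nonneg hS i)]
    exact htr i
  · have hsym : S j i = S i j := by
      have := hS.1
      have h2 := congrFun (congrFun this i) j
      simpa [Matrix.conjTranspose_apply] using h2
    have hq1 := hS.dotProduct_mulVec_nonneg (Pi.single i (1:ℝ) + Pi.single j 1)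
    have hq2 := hS.dotProduct_mulVec_nonneg (Pi.single i (1:ℝ) - Pi.single j 1)
    simp only [star_trivial, Matrix.mulVec_add, Matrix.mulVec_sub, Matrix.mulVec_single,
      dotProduct_add, dotProduct_sub, add_dotProduct,
      sub_dotProduct, single_dotProduct, mul_one, one_mul,
      Pi.add_apply, Pi.sub_apply, MulOpposite.op_one, one_smul, Matrix.col_apply] at hq1 hq2
    have hsumij : S i i + S j j ≤ S.trace := by
      have hsub : ({i, j} : Finset (Fin d)) ⊆ univ := Finset.subset_univ _
      have := Finset.sum_le_sum_of_subset_of_nonneg hsub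
        (fun k _ _ => diag_nonneg hS k)
      rwa [Finset.sum_pair hij] at this
    rw [abs_le]
    constructor <;> nlinarith [hq1, hq2, diag_nonneg hS i, diag_nonneg hS j]

lemma continuous_entry (i j : Fin d) : Continuous (fun S : Matrix (Fin d) (Fin d) ℝ => S i j) :=
  (continuous_apply j).comp (continuous_apply i)

lemma continuous_quad (x : Fin d → ℝ) :
    Continuous (fun S : Matrix (Fin d) (Fin d) ℝ => x ⬝ᵥ S *ᵥ x) := by
  have : (fun S : Matrix (Fin d) (Fin d) ℝ => x ⬝ᵥ S *ᵥ x)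
      = fun S => ∑ i, x i * ∑ j, S i j * x j := by
    funext S
    simp [dotProduct, Matrix.mulVec]
  rw [this]
  refine continuous_finset_sum _ fun i _ => Continuous.mul continuous_const ?_
  exact continuous_finset_sum _ fun j _ => (continuous_entry i j).mul continuous_const

lemma continuous_trace : Continuous (fun S : Matrix (Fin d) (Fin d) ℝ => S.trace) := by
  have : (fun S : Matrix (Fin d) (Fin d) ℝ => S.trace) = fun S => ∑ i, S i i := rfl
  rw [this]
  exact continuous_finset_sum _ fun i _ => continuous_entry i i

lemma isClosed_psd : IsClosed {S : Matrix (Fin d) (Fin d) ℝ | S.PosSemidef} := by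
  have heq : {S : Matrix (Fin d) (Fin d) ℝ | S.PosSemidef}
      = (⋂ i, ⋂ j, {S : Matrix (Fin d) (Fin d) ℝ | S j i = S i j})
        ∩ ⋂ x : Fin d → ℝ, {S : Matrix (Fin d) (Fin d) ℝ | 0 ≤ x ⬝ᵥ S *ᵥ x} := by
    ext S
    simp only [Set.mem_setOf_eq, Set.mem_inter_iff, Set.mem_iInter]
    constructor
    · intro hS
      refine ⟨fun i j => ?_, fun x => by simpa using hS.dotProduct_mulVec_nonneg x⟩
      have h2 := congrFun (congrFun hS.1 i) j
      simpa [Matrix.conjTranspose_apply] using h2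
    · intro ⟨h1, h2⟩
      refine Matrix.PosSemidef.of_dotProduct_mulVec_nonneg ?_ ?_
      · ext i j
        simp only [Matrix.conjTranspose_apply, star_trivial]
        exact h1 i j
      · intro x
        simpa using h2 x
  rw [heq]
  refine IsClosed.inter ?_ ?_
  · exact isClosed_iInter fun i => isClosed_iInter fun j =>
      isClosed_eq (continuous_entry j i) (continuous_entry i j)
  · exact isClosed_iInter fun x => isClosed_le continuous_const (continuous_quad x)

lemma isCompact_KK (R : ℝ) :
    IsCompact {S : Matrix (Fin d) (Fin d) ℝ | S.PosSemidef ∧ S.trace ≤ R} := by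
  have hbox : IsCompact (Set.univ.pi fun _ : Fin d => Set.univ.pi fun _ : Fin d => Set.Icc (-R) R
      : Set (Matrix (Fin d) (Fin d) ℝ)) :=
    isCompact_univ_pi fun _ => isCompact_univ_pi fun _ => isCompact_Icc
  refine hbox.of_isClosed_subset ?_ ?_
  · refine IsClosed.inter isClosed_psd ?_
    exact isClosed_le continuous_trace continuous_const
  · rintro S ⟨hS, htr⟩
    rw [Set.mem_univ_pi]
    intro i
    rw [Set.mem_univ_pi]
    intro j
    have h2 : |S i j| ≤ R := le_trans (entry_abs_le_trace hS i j) htr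
    exact abs_le.mp h2

lemma csum_sub_self (S₀ : Matrix (Fin d) (Fin d) ℝ) : csum (S₀ - S₀) = 0 := by
  simp [csum]

lemma continuous_csum_sub (S₀ : Matrix (Fin d) (Fin d) ℝ) :
    Continuous (fun S : Matrix (Fin d) (Fin d) ℝ => csum (S - S₀)) := by
  have : (fun S : Matrix (Fin d) (Fin d) ℝ => csum (S - S₀))
      = fun S => ∑ i, ∑ j, |S i j - S₀ i j| := by
    funext S
    simp [csum, Matrix.sub_apply]
  rw [this]
  refine continuous_finset_sum _ fun i _ => continuous_finset_sum _ fun j _ => ?_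
  exact ((continuous_entry i j).sub continuous_const).abs

lemma continuousOn_trsq_conj {Q : Matrix (Fin d) (Fin d) ℝ} (hQ : Q.PosSemidef) :
    ContinuousOn (fun S => (msqrt (Q * S * Q)).trace)
      {S : Matrix (Fin d) (Fin d) ℝ | S.PosSemidef} := by
  intro S₀ hS₀
  set f := fun S : Matrix (Fin d) (Fin d) ℝ => (msqrt (Q * S * Q)).trace with hf
  set G := fun S : Matrix (Fin d) (Fin d) ℝ =>
    (d:ℝ) * Real.sqrt ((csum Q)^2 * csum (S - S₀)) with hG
  have hGcont : Continuous G := by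
    refine continuous_const.mul ?_
    exact Real.continuous_sqrt.comp (continuous_const.mul (continuous_csum_sub S₀))
  have hG0 : G S₀ = 0 := by
    rw [hG]
    simp [csum, sub_self]
  have hbound : ∀ S ∈ {S : Matrix (Fin d) (Fin d) ℝ | S.PosSemidef},
      |f S - f S₀| ≤ G S := by
    intro S hS
    have hpsd : ∀ {T : Matrix (Fin d) (Fin d) ℝ}, T.PosSemidef → (Q * T * Q).PosSemidef := by
      intro T hT
      have := hT.mul_mul_conjTranspose_same Q
      rwa [hQ.1.eq] at this
    have hd1 := trsq_dist (hpsd hS) (hpsd hS₀)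
    have heq : Q * S * Q - Q * S₀ * Q = Q * (S - S₀) * Q := by noncomm_ring
    rw [heq] at hd1
    refine le_trans hd1 ?_
    refine mul_le_mul_of_nonneg_left ?_ (Nat.cast_nonneg d)
    refine Real.sqrt_le_sqrt ?_
    calc csum (Q * (S - S₀) * Q) ≤ csum (Q * (S - S₀)) * csum Q := csum_mul_le _ _
      _ ≤ csum Q * csum (S - S₀) * csum Q :=
          mul_le_mul_of_nonneg_right (csum_mul_le _ _) (csum_nonneg _)
      _ ≤ (csum Q)^2 * csum (S - S₀) := by nlinarith [csum_nonneg Q, csum_nonneg (S - S₀)]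
  -- squeeze
  have hlow : Filter.Tendsto (fun S => f S₀ - G S)
      (nhdsWithin S₀ {S : Matrix (Fin d) (Fin d) ℝ | S.PosSemidef}) (nhds (f S₀)) := by
    have : Filter.Tendsto (fun S => f S₀ - G S) (nhds S₀) (nhds (f S₀ - G S₀)) :=
      (continuous_const.sub hGcont).tendsto S₀
    rw [hG0, sub_zero] at this
    exact this.mono_left nhdsWithin_le_nhds
  have hhigh : Filter.Tendsto (fun S => f S₀ + G S)
      (nhdsWithin S₀ {S : Matrix (Fin d) (Fin d) ℝ | S.PosSemidef}) (nhds (f S₀)) := by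
    have : Filter.Tendsto (fun S => f S₀ + G S) (nhds S₀) (nhds (f S₀ + G S₀)) :=
      (continuous_const.add hGcont).tendsto S₀
    rw [hG0, add_zero] at this
    exact this.mono_left nhdsWithin_le_nhds
  refine tendsto_of_tendsto_of_tendsto_of_le_of_le' hlow hhigh ?_ ?_
  · filter_upwards [self_mem_nhdsWithin] with S hS
    have := (abs_le.mp (hbound S hS)).1
    linarith
  · filter_upwards [self_mem_nhdsWithin] with S hS
    have := (abs_le.mp (hbound S hS)).2
    linarith


end BW

open BW

/-- `F` attains its infimum on the closed positive semidefinite cone. -/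
theorem stmt4 {d n : ℕ} (Sig : Fin n → Matrix (Fin d) (Fin d) ℝ)
    (lam : Fin n → ℝ) (hSig : ∀ k, (Sig k).PosDef) (hsum : ∑ k, lam k = 1) :
    ∃ Shat : Matrix (Fin d) (Fin d) ℝ, Shat.PosSemidef ∧
      ∀ S : Matrix (Fin d) (Fin d) ℝ, S.PosSemidef → Fobj Sig lam Shat ≤ Fobj Sig lam S := by
  classical
  have hSigpsd : ∀ k, (Sig k).PosSemidef := fun k => (hSig k).posSemidef
  set Q : Fin n → Matrix (Fin d) (Fin d) ℝ := fun k => msqrt (Sig k) with hQdef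
  have hQpsd : ∀ k, (Q k).PosSemidef := fun k => msqrt_posSemidef (hSigpsd k)
  set C0 : ℝ := ∑ k, lam k * (Sig k).trace with hC0
  -- expansion, valid for every S
  have hexp : ∀ S : Matrix (Fin d) (Fin d) ℝ,
      Fobj Sig lam S = S.trace + C0
        - 2 * ∑ k, lam k * (msqrt (msqrt S * Sig k * msqrt S)).trace := by
    intro S
    rw [Fobj]
    have h1 : ∀ k ∈ (univ : Finset (Fin n)), lam k * W2sq S (Sig k)
        = lam k * S.trace + lam k * (Sig k).trace
          - 2 * (lam k * (msqrt (msqrt S * Sig k * msqrt S)).trace) := by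
      intro k _
      rw [W2sq]; ring
    rw [Finset.sum_congr rfl h1, Finset.sum_sub_distrib, Finset.sum_add_distrib,
      ← Finset.sum_mul, hsum, one_mul, ← Finset.mul_sum]
  -- PSD of the inner matrices
  have hMkpsd : ∀ (S : Matrix (Fin d) (Fin d) ℝ), S.PosSemidef → ∀ k,
      (msqrt S * Sig k * msqrt S).PosSemidef := by
    intro S hS k
    have := (hSigpsd k).conjTranspose_mul_mul_same (msqrt S)
    rwa [msqrt_herm hS] at this
  -- flip rewriting on PSD matrices
  have hflipS : ∀ (S : Matrix (Fin d) (Fin d) ℝ), S.PosSemidef → ∀ k,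
      (msqrt (msqrt S * Sig k * msqrt S)).trace = (msqrt (Q k * S * Q k)).trace := by
    intro S hS k
    have hA := trsq_flip (Q k * msqrt S)
    have hQQ : Q k * Q k = Sig k := msqrt_mul_self (hSigpsd k)
    have h1 : (Q k * msqrt S)ᴴ * (Q k * msqrt S) = msqrt S * Sig k * msqrt S := by
      rw [Matrix.conjTranspose_mul, msqrt_herm (hSigpsd k), msqrt_herm hS]
      calc msqrt S * Q k * (Q k * msqrt S) = msqrt S * (Q k * Q k) * msqrt S := by
            noncomm_ring
        _ = msqrt S * Sig k * msqrt S := by rw [hQQ]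
    have h2 : (Q k * msqrt S) * (Q k * msqrt S)ᴴ = Q k * S * Q k := by
      rw [Matrix.conjTranspose_mul, msqrt_herm (hSigpsd k), msqrt_herm hS]
      calc Q k * msqrt S * (msqrt S * Q k) = Q k * (msqrt S * msqrt S) * Q k := by
            noncomm_ring
        _ = Q k * S * Q k := by rw [msqrt_mul_self hS]
    rw [← h1, ← h2]
    exact hA
  have hrw : ∀ S : Matrix (Fin d) (Fin d) ℝ, S.PosSemidef → Fobj Sig lam S
      = S.trace + C0 - 2 * ∑ k, lam k * (msqrt (Q k * S * Q k)).trace := by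
    intro S hS
    rw [hexp S]
    congr 2
    exact Finset.sum_congr rfl fun k _ => by rw [hflipS S hS k]
  -- coercivity
  set sc : Fin n → ℝ := fun k => 4 * (n + 1) * (|lam k| + 1) * (csum (Sig k) + 1) with hsdef
  have hspos : ∀ k, 0 < sc k := by
    intro k
    have h1 := csum_nonneg (Sig k)
    have h2 := abs_nonneg (lam k)
    rw [hsdef]
    positivity
  set B : ℝ := ∑ k, |lam k| * (sc k * d) with hB
  have hcoer : ∀ S : Matrix (Fin d) (Fin d) ℝ, S.PosSemidef →
      (3/4) * S.trace + C0 - B ≤ Fobj Sig lam S := by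
    intro S hS
    have hTrS : 0 ≤ S.trace := trace_nonneg hS
    have hknn : ∀ k, 0 ≤ (msqrt (msqrt S * Sig k * msqrt S)).trace :=
      fun k => trace_nonneg (msqrt_posSemidef (hMkpsd S hS k))
    have hkbd : ∀ k, (msqrt (msqrt S * Sig k * msqrt S)).trace
        ≤ (csum (Sig k) * S.trace / sc k + sc k * d) / 2 := by
      intro k
      have h1 := trsq_le_coercive (hMkpsd S hS k) (hspos k)
      have h2 : (msqrt S * Sig k * msqrt S).trace ≤ csum (Sig k) * S.trace := by
        have hdom := smul_one_sub_posSemidef (hSigpsd k).1 (le_refl (csum (Sig k)))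
        have h3 := hdom.conjTranspose_mul_mul_same (msqrt S)
        rw [msqrt_herm hS] at h3
        have h4 : msqrt S * (csum (Sig k) • (1 : Matrix (Fin d) (Fin d) ℝ) - Sig k) * msqrt S
            = csum (Sig k) • S - msqrt S * Sig k * msqrt S := by
          rw [Matrix.mul_sub, Matrix.sub_mul, Matrix.mul_smul, Matrix.mul_one,
            Matrix.smul_mul, msqrt_mul_self hS]
        rw [h4] at h3
        have h5 := trace_le_trace h3
        rwa [Matrix.trace_smul, smul_eq_mul] at h5
      refine h1.trans ?_
      have hsk := hspos k
      gcongr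
    have hwk : ∀ k, |lam k| * csum (Sig k) / sc k ≤ 1 / (4 * ((n:ℝ) + 1)) := by
      intro k
      rw [div_le_div_iff₀ (hspos k) (by positivity)]
      simp only [hsdef]
      nlinarith [abs_nonneg (lam k), csum_nonneg (Sig k), Nat.cast_nonneg (α := ℝ) n,
        mul_nonneg (Nat.cast_nonneg (α := ℝ) n) (abs_nonneg (lam k)),
        mul_nonneg (Nat.cast_nonneg (α := ℝ) n) (csum_nonneg (Sig k))]
    have hstep : 2 * ∑ k, lam k * (msqrt (msqrt S * Sig k * msqrt S)).trace
        ≤ (1/4) * S.trace + B := by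
      have hs1 : ∑ k, lam k * (msqrt (msqrt S * Sig k * msqrt S)).trace
          ≤ ∑ k, |lam k| * (msqrt (msqrt S * Sig k * msqrt S)).trace :=
        Finset.sum_le_sum fun k _ =>
          mul_le_mul_of_nonneg_right (le_abs_self _) (hknn k)
      have hs2 : ∑ k, |lam k| * (msqrt (msqrt S * Sig k * msqrt S)).trace
          ≤ ∑ k, |lam k| * ((csum (Sig k) * S.trace / sc k + sc k * d) / 2) :=
        Finset.sum_le_sum fun k _ =>
          mul_le_mul_of_nonneg_left (hkbd k) (abs_nonneg _)
      have hs3 : ∀ k, |lam k| * ((csum (Sig k) * S.trace / sc k + sc k * d) / 2)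
          ≤ (1 / (4 * ((n:ℝ) + 1)) * S.trace + |lam k| * (sc k * d)) / 2 := by
        intro k
        have heq : |lam k| * ((csum (Sig k) * S.trace / sc k + sc k * d) / 2)
            = ((|lam k| * csum (Sig k) / sc k) * S.trace + |lam k| * (sc k * d)) / 2 := by
          field_simp
        rw [heq]
        have := mul_le_mul_of_nonneg_right (hwk k) hTrS
        linarith
      have hs4 : ∑ k, |lam k| * ((csum (Sig k) * S.trace / sc k + sc k * d) / 2)
          ≤ ∑ k, (1 / (4 * ((n:ℝ) + 1)) * S.trace + |lam k| * (sc k * d)) / 2 :=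
        Finset.sum_le_sum fun k _ => hs3 k
      have hs5 : ∑ k, (1 / (4 * ((n:ℝ) + 1)) * S.trace + |lam k| * (sc k * d)) / 2
          = ((n:ℝ) * (1 / (4 * ((n:ℝ) + 1)) * S.trace) + B) / 2 := by
        rw [← Finset.sum_div]
        congr 1
        rw [Finset.sum_add_distrib, Finset.sum_const, Finset.card_univ, Fintype.card_fin,
          nsmul_eq_mul, hB]
      have hs6 : (n:ℝ) * (1 / (4 * ((n:ℝ) + 1)) * S.trace) ≤ (1/4) * S.trace := by
        have hkey : (n:ℝ) * (1 / (4 * ((n:ℝ) + 1)) * S.trace)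
            = (n:ℝ) * S.trace / (4 * ((n:ℝ) + 1)) := by ring
        rw [hkey, div_le_iff₀ (by positivity)]
        nlinarith [Nat.cast_nonneg (α := ℝ) n, hTrS]
      linarith [hs1, hs2, hs4]
    have := hexp S
    linarith [hstep]
  -- value at zero
  have h0 : Fobj Sig lam (0 : Matrix (Fin d) (Fin d) ℝ) = C0 := by
    rw [hexp 0]
    have hz : ∀ k ∈ (univ : Finset (Fin n)),
        lam k * (msqrt (msqrt (0 : Matrix (Fin d) (Fin d) ℝ) * Sig k * msqrt 0)).trace = 0 := by
      intro k _
      rw [msqrt_zero]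
      simp [msqrt_zero]
    rw [Finset.sum_congr rfl hz]
    simp
  -- compactness and conclusion
  set R : ℝ := max 0 ((4/3) * (B + 1)) with hRdef
  have hKne : (0 : Matrix (Fin d) (Fin d) ℝ)
      ∈ {S : Matrix (Fin d) (Fin d) ℝ | S.PosSemidef ∧ S.trace ≤ R} := by
    refine ⟨Matrix.PosSemidef.zero, ?_⟩
    rw [Matrix.trace_zero]
    exact le_max_left _ _
  have hcont : ContinuousOn (Fobj Sig lam)
      {S : Matrix (Fin d) (Fin d) ℝ | S.PosSemidef ∧ S.trace ≤ R} := by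
    have hsub : {S : Matrix (Fin d) (Fin d) ℝ | S.PosSemidef ∧ S.trace ≤ R}
        ⊆ {S : Matrix (Fin d) (Fin d) ℝ | S.PosSemidef} := fun S hS => hS.1
    have hg : ContinuousOn
        (fun S : Matrix (Fin d) (Fin d) ℝ =>
          S.trace + C0 - 2 * ∑ k, lam k * (msqrt (Q k * S * Q k)).trace)
        {S : Matrix (Fin d) (Fin d) ℝ | S.PosSemidef} := by
      refine ContinuousOn.sub ?_ ?_
      · exact (continuous_trace.continuousOn).add continuousOn_const
      · refine ContinuousOn.mul continuousOn_const ?_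
        refine continuousOn_finset_sum _ fun k _ => ?_
        exact ContinuousOn.mul continuousOn_const (continuousOn_trsq_conj (hQpsd k))
    refine ContinuousOn.congr (hg.mono hsub) ?_
    intro S hS
    exact hrw S hS.1
  obtain ⟨Shat, hShatK, hmin⟩ := (isCompact_KK R).exists_isMinOn ⟨0, hKne⟩ hcont
  refine ⟨Shat, hShatK.1, ?_⟩
  intro S hS
  by_cases htr : S.trace ≤ R
  · exact isMinOn_iff.mp hmin S ⟨hS, htr⟩
  · push_neg at htr
    have h1 : Fobj Sig lam Shat ≤ C0 := by
      have h2 := isMinOn_iff.mp hmin 0 hKne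
      rwa [h0] at h2
    have h2 : C0 ≤ Fobj Sig lam S := by
      have h3 := hcoer S hS
      have hRge : (4/3) * (B + 1) ≤ R := le_max_right _ _
      linarith
    linarith
end

section
/- Let Σ₁, …, Σ_n be symmetric positive definite d×d real matrices and λ₁, …, λ_n real weights with Σ_{k=1}^n λ_k = 1, and suppose a symmetric positive definite matrix S* satisfies the stationarity equation S* = Σ_{k=1}^n λ_k (S*^{1/2} Σ_k S*^{1/2})^{1/2}. Then for every t > 0, F(t·S*) = Σ_{k=1}^n λ_k Tr(Σ_k) + (t − 2√t)·Tr(S*). -/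
open Matrix BigOperators Finset
open scoped Classical

lemma msqrt_eq {d : ℕ} {M : Matrix (Fin d) (Fin d) ℝ} (h : M.PosSemidef) :
    msqrt M = cfc Real.sqrt M := by
  rw [h.1.cfc_eq, msqrt, dif_pos h]
  rfl

lemma posSemidef_smul' {d : ℕ} {M : Matrix (Fin d) (Fin d) ℝ} (hM : M.PosSemidef)
    {c : ℝ} (hc : 0 ≤ c) : (c • M).PosSemidef := by
  constructor
  · unfold Matrix.IsHermitian
    rw [conjTranspose_smul, hM.1.eq]
    simp
  · intro x
    exact (hM.smul hc).2 x

lemma msqrt_smul {d : ℕ} {M : Matrix (Fin d) (Fin d) ℝ} (hM : M.PosSemidef)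
    {c : ℝ} (hc : 0 ≤ c) : msqrt (c • M) = Real.sqrt c • msqrt M := by
  rw [msqrt_eq (posSemidef_smul' hM hc), msqrt_eq hM]
  have hsa : IsSelfAdjoint M := hM.1
  rw [← cfc_comp_const_mul c Real.sqrt M]
  have hf : (fun x => Real.sqrt (c * x)) = fun x => Real.sqrt c * Real.sqrt x :=
    funext fun x => Real.sqrt_mul hc x
  rw [hf, cfc_const_mul (Real.sqrt c) Real.sqrt M]

/-- along the ray through a stationary point,
`F(t S*) = ∑ λₖ Tr Σₖ + (t − 2√t) Tr S*`. -/
theorem stmt9 {d n : ℕ} (Sig : Fin n → Matrix (Fin d) (Fin d) ℝ)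
    (lam : Fin n → ℝ) (hSig : ∀ k, (Sig k).PosDef) (hsum : ∑ k, lam k = 1)
    (Sstar : Matrix (Fin d) (Fin d) ℝ) (hSstar : Sstar.PosDef)
    (hstat : Sstar = ∑ k, lam k • msqrt (msqrt Sstar * Sig k * msqrt Sstar))
    (t : ℝ) (ht : 0 < t) :
    Fobj Sig lam (t • Sstar)
      = (∑ k, lam k * (Sig k).trace) + (t - 2 * Real.sqrt t) * Sstar.trace := by
  set R := msqrt Sstar with hR
  have hRps : Sstar.PosSemidef := hSstar.posSemidef
  have hRH : Rᴴ = R := by rw [hR, msqrt_eq hRps]; exact cfc_predicate (p := IsSelfAdjoint) Real.sqrt Sstar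
  have hQ : ∀ k, (R * Sig k * R).PosSemidef := fun k => by
    have := (hSig k).posSemidef.mul_mul_conjTranspose_same R
    rwa [hRH] at this
  have hmt : msqrt (t • Sstar) = Real.sqrt t • R := msqrt_smul hRps ht.le
  have htr : Sstar.trace = ∑ k, lam k * (msqrt (R * Sig k * R)).trace := by
    conv_lhs => rw [hstat]
    rw [trace_sum]
    simp [Matrix.trace_smul, smul_eq_mul]
  have hW : ∀ k, W2sq (t • Sstar) (Sig k)
      = t * Sstar.trace + (Sig k).trace
        - 2 * (Real.sqrt t * (msqrt (R * Sig k * R)).trace) := by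
    intro k
    unfold W2sq
    rw [hmt, Matrix.trace_smul]
    have h1 : (Real.sqrt t • R) * Sig k * (Real.sqrt t • R) = t • (R * Sig k * R) := by
      rw [smul_mul_assoc, smul_mul_assoc, mul_smul_comm, smul_smul,
        Real.mul_self_sqrt ht.le]
    rw [h1, msqrt_smul (hQ k) ht.le, Matrix.trace_smul]
    simp [smul_eq_mul]
  unfold Fobj
  simp only [hW]
  have hexp : ∑ k, lam k * (t * Sstar.trace + (Sig k).trace
        - 2 * (Real.sqrt t * (msqrt (R * Sig k * R)).trace))
      = (∑ k, lam k) * (t * Sstar.trace) + (∑ k, lam k * (Sig k).trace)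
        - 2 * Real.sqrt t * (∑ k, lam k * (msqrt (R * Sig k * R)).trace) := by
    rw [Finset.sum_mul, Finset.mul_sum, ← Finset.sum_add_distrib, ← Finset.sum_sub_distrib]
    exact Finset.sum_congr rfl fun k _ => by ring
  rw [hexp, hsum, ← htr]
  ring
end
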